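/- Let c and c' be two cycle points in the same finite minimal invariant set M (for the maps g_l(t) = R^{-1}(t−l), l ∈ L). Then Λ(c) = Λ(c'), where Λ(c) = { l₀ + R l₁ + ⋯ + R^k l_k + R^{k+1} c : l₀…l_k ∈ Ω(c) }. -/

import Mathlib

open Complex

/-- `m_B(x) = (1/N) ∑_{b ∈ B} e^{2πibx}`. -/
noncomputable def mBg (B : Finset ℤ) (x : ℝ) : ℂ :=
  (∑ b ∈ B, Complex.exp (2 * Real.pi * Complex.I * ((b : ℝ) * x))) / (B.card : ℂ)

/-- Apply the maps `g_l(t) = (t - l)/R` along a word, first digit first. -/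
noncomputable def run (R : ℤ) (c : ℝ) (w : List ℤ) : ℝ :=
  w.foldl (fun t l => (t - (l : ℝ)) / (R : ℝ)) c

/-- A cycle word for `c`: a nonempty word with digits in `L`, with all transitions
possible (`α_l m_B(g_l(t)) ≠ 0`), returning to `c` only at the last step. -/
noncomputable def CycleWord (R : ℤ) (B L : Finset ℤ) (α : ℤ → ℂ) (c : ℝ) (w : List ℤ) :
    Prop :=
  w ≠ [] ∧ (∀ l ∈ w, l ∈ L) ∧ run R c w = c ∧
  (∀ k : ℕ, k + 1 < w.length → run R c (w.take (k + 1)) ≠ c) ∧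
  (∀ k : ℕ, k < w.length → α (w.getD k 0) * mBg B (run R c (w.take (k + 1))) ≠ 0)

/-- `Ω(c)`: finite words with digits in `L` that do not end in a cycle word for `c`. -/
noncomputable def Omega (R : ℤ) (B L : Finset ℤ) (α : ℤ → ℂ) (c : ℝ) (w : List ℤ) :
    Prop :=
  (∀ l ∈ w, l ∈ L) ∧ ¬ ∃ u v : List ℤ, CycleWord R B L α c v ∧ w = u ++ v

/-- `Λ(c) = { l₀ + R l₁ + ⋯ + R^k l_k + R^{k+1} c : l₀…l_k ∈ Ω(c) }`. -/
noncomputable def Lam (R : ℤ) (B L : Finset ℤ) (α : ℤ → ℂ) (c : ℝ) : Set ℝ :=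
  {x | ∃ w : List ℤ, Omega R B L α c w ∧
    x = (∑ i ∈ Finset.range w.length, (R : ℝ) ^ i * (w.getD i 0 : ℝ)) +
        (R : ℝ) ^ w.length * c}

/-- Invariance of a set under the possible transitions. -/
noncomputable def InvSet (R : ℤ) (B L : Finset ℤ) (α : ℤ → ℂ) (M : Set ℝ) : Prop :=
  ∀ t ∈ M, ∀ l ∈ L, α l * mBg B ((t - (l : ℝ)) / (R : ℝ)) ≠ 0 →
    (t - (l : ℝ)) / (R : ℝ) ∈ M

/-- A min-set: nonempty, finite, invariant, and minimal with these properties. -/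
noncomputable def MinSet (R : ℤ) (B L : Finset ℤ) (α : ℤ → ℂ) (M : Set ℝ) : Prop :=
  M.Finite ∧ M.Nonempty ∧ InvSet R B L α M ∧
    ∀ M' ⊆ M, M'.Nonempty → InvSet R B L α M' → M' = M

/-- Auxiliary: the value of a word relative to a base point. -/
noncomputable def valW (R : ℤ) (w : List ℤ) (c : ℝ) : ℝ :=
  (∑ i ∈ Finset.range w.length, (R : ℝ) ^ i * (w.getD i 0 : ℝ)) + (R : ℝ) ^ w.length * c

lemma valW_nil (R : ℤ) (c : ℝ) : valW R [] c = c := by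
  simp [valW]

lemma valW_cons (R : ℤ) (l : ℤ) (w : List ℤ) (c : ℝ) :
    valW R (l :: w) c = (l : ℝ) + (R : ℝ) * valW R w c := by
  unfold valW
  rw [List.length_cons, Finset.sum_range_succ', mul_add, Finset.mul_sum]
  simp only [List.getD_cons_succ, List.getD_cons_zero, pow_zero, one_mul]
  rw [Finset.sum_congr rfl
    (fun i _ => by ring :
      ∀ i ∈ Finset.range w.length,
        (R : ℝ) ^ (i + 1) * ((w.getD i 0 : ℤ) : ℝ) =
          (R : ℝ) * ((R : ℝ) ^ i * ((w.getD i 0 : ℤ) : ℝ)))]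
  ring

lemma valW_append (R : ℤ) (w u : List ℤ) (c : ℝ) :
    valW R (w ++ u) c = valW R w (valW R u c) := by
  induction w with
  | nil => simp [valW_nil]
  | cons l w ih => rw [List.cons_append, valW_cons, valW_cons, ih]

lemma valW_run (R : ℤ) (hR : (R : ℝ) ≠ 0) (w : List ℤ) :
    ∀ c : ℝ, valW R w (run R c w) = c := by
  induction w with
  | nil => intro c; rw [valW_nil]; rfl
  | cons l w ih =>
    intro c
    have hrun : run R c (l :: w) = run R ((c - (l : ℝ)) / (R : ℝ)) w := rfl
    rw [hrun, valW_cons, ih]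
    field_simp
    ring

lemma run_append (R : ℤ) (c : ℝ) (u v : List ℤ) :
    run R c (u ++ v) = run R (run R c u) v := by
  simp [run, List.foldl_append]

/-- Stripping cycle-word suffixes: every word with digits in `L` has the same value
as some word in `Ω(c)`. -/
lemma strip (R : ℤ) (hR : (R : ℝ) ≠ 0) (B L : Finset ℤ) (α : ℤ → ℂ) (c : ℝ) :
    ∀ n (w : List ℤ), w.length ≤ n → (∀ l ∈ w, l ∈ L) →
      ∃ w', Omega R B L α c w' ∧ valW R w' c = valW R w c := by
  intro n
  induction n with
  | zero =>
    intro w hw hdig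
    have : w = [] := List.length_eq_zero_iff.mp (Nat.le_zero.mp hw)
    subst this
    refine ⟨[], ⟨by simp, ?_⟩, rfl⟩
    rintro ⟨u, v, hv, huv⟩
    have := List.append_eq_nil_iff.mp huv.symm
    exact hv.1 this.2
  | succ n ih =>
    intro w hw hdig
    by_cases hΩ : Omega R B L α c w
    · exact ⟨w, hΩ, rfl⟩
    · have hex : ∃ u v : List ℤ, CycleWord R B L α c v ∧ w = u ++ v := by
        by_contra h
        exact hΩ ⟨hdig, h⟩
      obtain ⟨u, v, hv, huv⟩ := hex
      have hvne : v ≠ [] := hv.1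
      have hvlen : 0 < v.length := List.length_pos_iff.mpr hvne
      have hulen : u.length ≤ n := by
        have : u.length + v.length = w.length := by
          rw [huv, List.length_append]
        omega
      have hudig : ∀ l ∈ u, l ∈ L := fun l hl => hdig l (by rw [huv]; exact List.mem_append_left _ hl)
      obtain ⟨w', hw', hval⟩ := ih u hulen hudig
      refine ⟨w', hw', ?_⟩
      have hrun : run R c v = c := hv.2.2.1
      have hv2 : valW R v c = c := by
        have h := valW_run R hR v c
        rwa [hrun] at h
      rw [hval, huv, valW_append, hv2]

/-- Reachability within a min-set: every point is reachable from every point. -/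
lemma reach (R : ℤ) (B L : Finset ℤ) (α : ℤ → ℂ) (M : Set ℝ) (hM : MinSet R B L α M)
    (c : ℝ) (hc : c ∈ M) (c' : ℝ) (hc' : c' ∈ M) :
    ∃ u : List ℤ, (∀ l ∈ u, l ∈ L) ∧ run R c u = c' := by
  obtain ⟨hfin, hne, hinv, hmin⟩ := hM
  set M' : Set ℝ := {t | t ∈ M ∧ ∃ u : List ℤ, (∀ l ∈ u, l ∈ L) ∧ run R c u = t} with hM'
  have hsub : M' ⊆ M := fun t ht => ht.1
  have hne' : M'.Nonempty := ⟨c, hc, [], by simp, rfl⟩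
  have hinv' : InvSet R B L α M' := by
    intro t ht l hl hα
    obtain ⟨htM, u, hu, hru⟩ := ht
    refine ⟨hinv t htM l hl hα, u ++ [l], ?_, ?_⟩
    · intro l' hl'
      rcases List.mem_append.mp hl' with h | h
      · exact hu l' h
      · rw [List.mem_singleton.mp h]; exact hl
    · rw [run_append, hru]; rfl
  have := hmin M' hsub hne' hinv'
  rw [← this] at hc'
  exact hc'.2

/-- One inclusion, given a connecting word. -/
lemma lam_subset (R : ℤ) (hR : (R : ℝ) ≠ 0) (B L : Finset ℤ) (α : ℤ → ℂ) (c c' : ℝ)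
    (u : List ℤ) (hu : ∀ l ∈ u, l ∈ L) (hru : run R c u = c') :
    Lam R B L α c ⊆ Lam R B L α c' := by
  intro x hx
  obtain ⟨w, hΩ, hxe⟩ := hx
  have hx' : x = valW R w c := hxe
  have hcv : c = valW R u c' := by rw [← hru]; exact (valW_run R hR u c).symm
  have hx2 : x = valW R (w ++ u) c' := by
    rw [valW_append, ← hcv, hx']
  have hdig : ∀ l ∈ w ++ u, l ∈ L := by
    intro l hl
    rcases List.mem_append.mp hl with h | h
    · exact hΩ.1 l h
    · exact hu l h
  obtain ⟨w', hw', hval⟩ :=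
    strip R hR B L α c' (w ++ u).length (w ++ u) le_rfl hdig
  exact ⟨w', hw', by rw [hx2, ← hval]; rfl⟩

/-- for two cycle points `c, c'` in the same min-set `M`, `Λ(c) = Λ(c')`. -/
theorem stmt13 (R : ℤ) (hR : 2 ≤ R) (B L : Finset ℤ) (h0L : (0 : ℤ) ∈ L) (α : ℤ → ℂ)
    (hα0 : α 0 = 1) (M : Set ℝ) (hM : MinSet R B L α M) (c c' : ℝ)
    (hc : c ∈ M) (hc' : c' ∈ M) :
    Lam R B L α c = Lam R B L α c' := by
  have hRne : (R : ℝ) ≠ 0 := by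
    have : (R : ℤ) ≠ 0 := by omega
    exact_mod_cast this
  obtain ⟨u, hu, hru⟩ := reach R B L α M hM c hc c' hc'
  obtain ⟨u', hu', hru'⟩ := reach R B L α M hM c' hc' c hc
  exact Set.Subset.antisymm (lam_subset R hRne B L α c c' u hu hru)
    (lam_subset R hRne B L α c' c u' hu' hru')
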